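/- Define the 'negative' continued fraction value of a nonempty list of rationals [x₀, x₁, …, xₙ] recursively by cf([x₀]) = x₀ and cf(x₀ :: rest) = x₀ − 1/cf(rest) (interpreting division in ℚ with 1/0 = 0). Then for every rational number p/q there exists a nonempty list of integers [x₀, …, xₙ] whose negative continued fraction value equals p/q. -/

import Mathlib

def cf : List ℚ → ℚ
  | [] => 0
  | [x] => x
  | x :: y :: rest => x - 1 / cf (y :: rest)

theorem cf_aux (n : ℕ) : ∀ q : ℚ, q.den ≤ n →
    ∃ l : List ℤ, l ≠ [] ∧ cf (l.map (fun m => (m : ℚ))) = q := by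
  induction n using Nat.strong_induction_on with
  | _ n ih =>
  intro q hq
  by_cases h1 : q.den = 1
  · refine ⟨[q.num], by simp, ?_⟩
    simp [cf, Rat.coe_int_num_of_den_eq_one h1]
  · set d : ℤ := (q.den : ℤ) with hd_def
    have hd : 0 < d := by positivity
    have hdQ : ((d : ℚ)) ≠ 0 := by exact_mod_cast hd.ne'
    have hqd : (q.num : ℚ) = q * d := by
      have h := Rat.num_div_den q
      rw [div_eq_iff (by exact_mod_cast q.den_pos.ne' : ((q.den : ℚ)) ≠ 0)] at h
      rw [hd_def]
      push_cast
      linarith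
    set a : ℤ := ⌈q⌉ * d - q.num with ha_def
    have hqlt : q < ⌈q⌉ := by
      rcases lt_or_eq_of_le (Int.le_ceil q) with h | h
      · exact h
      · exact absurd (by rw [h]; simp) h1
    have ha0 : 0 < a := by
      have h2 : q * d < ⌈q⌉ * d := mul_lt_mul_of_pos_right hqlt (by exact_mod_cast hd)
      have h3 : (q.num : ℚ) < ((⌈q⌉ * d : ℤ) : ℚ) := by push_cast; rw [hqd]; exact h2
      have h4 : q.num < ⌈q⌉ * d := by exact_mod_cast h3
      simpa [ha_def] using sub_pos.mpr h4
    have had : a < d := by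
      have h2 : (⌈q⌉ : ℚ) < q + 1 := Int.ceil_lt_add_one q
      have h3 : (⌈q⌉ : ℚ) * d < (q + 1) * d := mul_lt_mul_of_pos_right h2 (by exact_mod_cast hd)
      have h4 : ((⌈q⌉ * d : ℤ) : ℚ) < ((q.num + d : ℤ) : ℚ) := by
        push_cast; rw [hqd]; ring_nf; ring_nf at h3; linarith
      have h5 : ⌈q⌉ * d < q.num + d := by exact_mod_cast h4
      omega
    set q' : ℚ := (d : ℚ) / (a : ℚ) with hq'_def
    have haQ : ((a : ℚ)) ≠ 0 := by exact_mod_cast ha0.ne'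
    have hq'den : (q'.den : ℤ) ∣ a := by
      rw [hq'_def, ← Rat.divInt_eq_div]
      exact Rat.den_dvd d a
    have hq'lt : q'.den < n := by
      have h6 : (q'.den : ℤ) ≤ a := Int.le_of_dvd ha0 hq'den
      have : (q'.den : ℤ) < d := lt_of_le_of_lt h6 had
      have : (q'.den : ℤ) < (n : ℤ) := lt_of_lt_of_le this (by rw [hd_def]; exact_mod_cast hq)
      exact_mod_cast this
    obtain ⟨l, hl, hcf⟩ := ih q'.den hq'lt q' le_rfl
    refine ⟨⌈q⌉ :: l, by simp, ?_⟩
    cases l with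
    | nil => exact absurd rfl hl
    | cons y t =>
      show (⌈q⌉ : ℚ) - 1 / cf (((y :: t).map (fun m => (m : ℚ)))) = q
      rw [hcf, hq'_def, one_div_div]
      have : (a : ℚ) = ⌈q⌉ * d - q * d := by push_cast [ha_def]; rw [hqd]
      rw [this]
      field_simp
      ring

theorem stmt9 (q : ℚ) :
    ∃ l : List ℤ, l ≠ [] ∧ cf (l.map (fun n => (n : ℚ))) = q := by
  obtain ⟨l, h1, h2⟩ := cf_aux q.den q le_rfl
  exact ⟨l, h1, h2⟩
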